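/- Compounding effect of hard decoding steps: in the decoding setup, let δ ∈ (0,1), η > 0, ρ > 0, and m ∈ ℕ. Assume U_V(E_t) > 0 for every t ∈ {0,…,d−1}, and assume Prec_seq(S) ≥ 1 − δ (which forces Q_S(F_t) > 0 for every t, since V = F_d ⊆ F_t). Define α_t = Q_S(F_t)/Q_S(F_{t−1}) and β_t = U_V(E_t)/U_V(E_{t−1}) for t ∈ {1,…,d}. Suppose there is a set H ⊆ {1,…,d} with |H| ≥ m such that for every t ∈ H, α_t ≥ e^{−η} implies β_t ≤ e^{−ρ}. Then Rec_seq(S) ≤ exp(−ρ · max(0, m − ln(1/(1−δ))/η)). -/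

import Mathlib

open Finset

open scoped Classical

/-- The prefix `y_{<t}` (the first `t` tokens, 0-indexed) of a sequence `y ∈ 𝒱^d`. -/
def prefixOf {𝒱 : Type*} {d : ℕ} (y : Fin d → 𝒱) (t : Fin d) : Fin t.val → 𝒱 :=
  fun i => y ⟨i.val, i.isLt.trans t.isLt⟩

/-- The valid-token set `G(y_{<t})`: tokens `w` such that some completion of the prefix
followed by `w` lies in the valid set `V`. -/
noncomputable def validTokens {𝒱 : Type*} [Fintype 𝒱] {d : ℕ}
    (V : Finset (Fin d → 𝒱)) (t : Fin d) (p : Fin t.val → 𝒱) : Finset 𝒱 :=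
  Finset.univ.filter fun w => ∃ y ∈ V, prefixOf y t = p ∧ y t = w

/-- The induced distribution `Q_S` of a cutoff strategy `S`:
`Q_S(y) = ∏_t 1[y_t ∈ S_t(y_{<t})] / |S_t(y_{<t})|`. -/
noncomputable def QS {𝒱 : Type*} [Fintype 𝒱] {d : ℕ}
    (S : ∀ t : Fin d, (Fin t.val → 𝒱) → Finset 𝒱) (y : Fin d → 𝒱) : ℝ :=
  ∏ t, if y t ∈ S t (prefixOf y t) then (1 : ℝ) / (S t (prefixOf y t)).card else 0

/-- The event `F_k`: sequences whose first `k` tokens are all valid-preserving. -/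
noncomputable def Fevent {𝒱 : Type*} [Fintype 𝒱] {d : ℕ}
    (V : Finset (Fin d → 𝒱)) (k : ℕ) : Finset (Fin d → 𝒱) :=
  Finset.univ.filter fun y => ∀ t : Fin d, t.val < k → y t ∈ validTokens V t (prefixOf y t)

/-- The event `E_k`: sequences whose first `k` tokens are all retained by the strategy. -/
noncomputable def Eevent {𝒱 : Type*} [Fintype 𝒱] {d : ℕ}
    (S : ∀ t : Fin d, (Fin t.val → 𝒱) → Finset 𝒱) (k : ℕ) : Finset (Fin d → 𝒱) :=
  Finset.univ.filter fun y => ∀ t : Fin d, t.val < k → y t ∈ S t (prefixOf y t)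

/-- The uniform distribution `U_V` on the valid set: `U_V(A) = |V ∩ A| / |V|`. -/
noncomputable def UV {𝒱 : Type*} [Fintype 𝒱] {d : ℕ}
    (V A : Finset (Fin d → 𝒱)) : ℝ :=
  ((V ∩ A).card : ℝ) / (V.card : ℝ)

lemma prefixOf_snoc {𝒱 : Type*} {n : ℕ} (y : Fin n → 𝒱) (w : 𝒱) (t : Fin n) :
    prefixOf (Fin.snoc y w) t.castSucc = prefixOf y t := by
  funext i
  simp only [prefixOf, Fin.snoc]
  rw [dif_pos (i.isLt.trans t.isLt)]
  rfl

lemma prefixOf_snoc_last {𝒱 : Type*} {n : ℕ} (y : Fin n → 𝒱) (w : 𝒱) :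
    prefixOf (Fin.snoc y w : Fin (n+1) → 𝒱) (Fin.last n) = fun i => y ⟨i.val, i.isLt⟩ := by
  funext i
  simp only [prefixOf, Fin.snoc]
  rw [dif_pos (show (i : ℕ) < n from i.isLt)]
  rfl

lemma sum_chain {𝒱 : Type*} [Fintype 𝒱] :
    ∀ (d : ℕ) (g : ∀ t : Fin d, (Fin t.val → 𝒱) → 𝒱 → ℝ),
      (∀ t p, ∑ w, g t p w = 1) →
      ∑ y : Fin d → 𝒱, ∏ t, g t (prefixOf y t) (y t) = 1 := by
  intro d
  induction d with
  | zero => intro g hg; simp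
  | succ n ih =>
    intro g hg
    rw [← (Fin.snocEquiv (fun _ => 𝒱)).sum_comp
      (fun y => ∏ t, g t (prefixOf y t) (y t))]
    rw [Fintype.sum_prod_type_right]
    have key : ∀ y : Fin n → 𝒱,
        (∑ w : 𝒱, ∏ t, g t (prefixOf ((Fin.snocEquiv fun _ => 𝒱) (w, y)) t)
            (((Fin.snocEquiv fun _ => 𝒱) (w, y)) t))
        = ∏ t : Fin n, g t.castSucc (prefixOf y t) (y t) := by
      intro y
      have h1 : ∀ w : 𝒱,
          (∏ t, g t (prefixOf ((Fin.snocEquiv fun _ => 𝒱) (w, y)) t)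
            (((Fin.snocEquiv fun _ => 𝒱) (w, y)) t))
          = (∏ t : Fin n, g t.castSucc (prefixOf y t) (y t)) *
              g (Fin.last n) (fun i => y ⟨i.val, i.isLt⟩) w := by
        intro w
        have hsnoc : (Fin.snocEquiv fun _ : Fin (n+1) => 𝒱) (w, y)
            = (Fin.snoc y w : Fin (n+1) → 𝒱) := rfl
        rw [hsnoc, Fin.prod_univ_castSucc]
        congr 1
        · exact Finset.prod_congr rfl fun t _ => by rw [prefixOf_snoc, Fin.snoc_castSucc]
        · rw [prefixOf_snoc_last, Fin.snoc_last]
      rw [Finset.sum_congr rfl fun w _ => h1 w, ← Finset.mul_sum,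
        hg (Fin.last n) (fun i => y ⟨i.val, i.isLt⟩), mul_one]
    rw [Finset.sum_congr rfl fun y _ => key y]
    exact ih (fun t => g t.castSucc) (fun t p => hg t.castSucc p)

lemma telescope (f : ℕ → ℝ) : ∀ n : ℕ, (∀ i, i < n → f i ≠ 0) →
    f 0 * ∏ i ∈ Finset.range n, f (i+1) / f i = f n := by
  intro n
  induction n with
  | zero => intro _; simp
  | succ k ih =>
    intro h
    rw [Finset.prod_range_succ, ← mul_assoc, ih (fun i hi => h i (hi.trans k.lt_succ_self))]
    field_simp [h k k.lt_succ_self]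

/-- Compounding effect of hard decoding steps: if `Prec_seq(S) = Q_S(V) ≥ 1 − δ`, the
events `E_t` have positive `U_V`-mass, and at least `m` steps `t` are hard — meaning
`α_t = Q_S(F_t)/Q_S(F_{t−1}) ≥ e^{−η}` forces `β_t = U_V(E_t)/U_V(E_{t−1}) ≤ e^{−ρ}` —
then `Rec_seq(S) = U_V(E_d) ≤ exp(−ρ·max(0, m − ln(1/(1−δ))/η))`. -/
theorem compounding_hard_steps {𝒱 : Type*} [Fintype 𝒱] [Nonempty 𝒱]
    {d : ℕ} (hd : 1 ≤ d)
    (V : Finset (Fin d → 𝒱)) (hV : V.Nonempty)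
    (S : ∀ t : Fin d, (Fin t.val → 𝒱) → Finset 𝒱)
    (hS : ∀ (t : Fin d) (p : Fin t.val → 𝒱), (S t p).Nonempty)
    (δ η ρ : ℝ) (hδ : 0 < δ ∧ δ < 1) (hη : 0 < η) (hρ : 0 < ρ) (m : ℕ)
    (hposE : ∀ t : Fin d, 0 < UV V (Eevent S t.val))
    (hprec : 1 - δ ≤ ∑ y ∈ V, QS S y)
    (Hard : Finset (Fin d)) (hm : m ≤ Hard.card)
    (hhard : ∀ t ∈ Hard,
      Real.exp (-η) ≤
          (∑ y ∈ Fevent V (t.val + 1), QS S y) / (∑ y ∈ Fevent V t.val, QS S y) →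
      UV V (Eevent S (t.val + 1)) / UV V (Eevent S t.val) ≤ Real.exp (-ρ)) :
    UV V (Eevent S d) ≤
      Real.exp (-ρ * max 0 ((m : ℝ) - Real.log (1 / (1 - δ)) / η)) := by

  have h1δ : (0:ℝ) < 1 - δ := by linarith [hδ.2]
  set QF : ℕ → ℝ := fun k => ∑ y ∈ Fevent V k, QS S y with hQFdef
  set UE : ℕ → ℝ := fun k => UV V (Eevent S k) with hUEdef
  -- basic facts about QS
  have hQS0 : ∀ y : Fin d → 𝒱, 0 ≤ QS S y := by
    intro y
    apply Finset.prod_nonneg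
    intro t _
    split
    · positivity
    · exact le_refl 0
  -- normalization
  have hsum1 : ∑ y : Fin d → 𝒱, QS S y = 1 := by
    have := sum_chain d (fun (t : Fin d) (p : Fin t.val → 𝒱) (w : 𝒱) =>
      if w ∈ S t p then (1 : ℝ) / (S t p).card else 0) ?_
    · exact this
    · intro t p
      rw [Finset.sum_ite_mem, Finset.univ_inter, Finset.sum_const, nsmul_eq_mul]
      have hc : ((S t p).card : ℝ) ≠ 0 := by
        exact_mod_cast (hS t p).card_pos.ne'
      field_simp
  -- V ⊆ Fevent V k
  have hVF : ∀ k : ℕ, V ⊆ Fevent V k := by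
    intro k y hy
    simp only [Fevent, Finset.mem_filter, Finset.mem_univ, true_and]
    intro t _
    simp only [validTokens, Finset.mem_filter, Finset.mem_univ, true_and]
    exact ⟨y, hy, rfl, rfl⟩
  -- QF positivity and bounds
  have hQFge : ∀ k : ℕ, 1 - δ ≤ QF k := by
    intro k
    refine le_trans hprec ?_
    exact Finset.sum_le_sum_of_subset_of_nonneg (hVF k) (fun y _ _ => hQS0 y)
  have hQFpos : ∀ k : ℕ, 0 < QF k := fun k => lt_of_lt_of_le h1δ (hQFge k)
  have hQFle1 : ∀ k : ℕ, QF k ≤ 1 := by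
    intro k
    rw [← hsum1]
    exact Finset.sum_le_sum_of_subset_of_nonneg (Finset.subset_univ _) (fun y _ _ => hQS0 y)
  have hFanti : ∀ k : ℕ, Fevent V (k+1) ⊆ Fevent V k := by
    intro k y hy
    simp only [Fevent, Finset.mem_filter, Finset.mem_univ, true_and] at hy ⊢
    exact fun t ht => hy t (ht.trans k.lt_succ_self)
  have hQFanti : ∀ k : ℕ, QF (k+1) ≤ QF k := by
    intro k
    exact Finset.sum_le_sum_of_subset_of_nonneg (hFanti k) (fun y _ _ => hQS0 y)
  -- E events
  have hEanti : ∀ k : ℕ, Eevent S (k+1) ⊆ Eevent S k := by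
    intro k y hy
    simp only [Eevent, Finset.mem_filter, Finset.mem_univ, true_and] at hy ⊢
    exact fun t ht => hy t (ht.trans k.lt_succ_self)
  have hUE0 : UE 0 = 1 := by
    have hE0 : Eevent S 0 = (Finset.univ : Finset (Fin d → 𝒱)) := by
      apply Finset.filter_true_of_mem
      intro y _
      exact fun t ht => absurd ht (Nat.not_lt_zero _)
    show UV V (Eevent S 0) = 1
    rw [hE0]
    simp only [UV, Finset.inter_univ]
    exact div_self (by exact_mod_cast hV.card_pos.ne')
  have hUEnonneg : ∀ k : ℕ, 0 ≤ UE k := by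
    intro k
    exact div_nonneg (by positivity) (by positivity)
  have hUEanti : ∀ k : ℕ, UE (k+1) ≤ UE k := by
    intro k
    have hsub : V ∩ Eevent S (k+1) ⊆ V ∩ Eevent S k :=
      Finset.inter_subset_inter (le_refl V) (hEanti k)
    have := Finset.card_le_card hsub
    show UV V (Eevent S (k+1)) ≤ UV V (Eevent S k)
    unfold UV
    gcongr
  have hUEpos : ∀ k : ℕ, k < d → 0 < UE k := fun k hk => hposE ⟨k, hk⟩
  have htelQ : QF 0 * ∏ i ∈ Finset.range d, QF (i+1) / QF i = QF d :=
    telescope QF d (fun i _ => (hQFpos i).ne')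
  have htelU : UE 0 * ∏ i ∈ Finset.range d, UE (i+1) / UE i = UE d :=
    telescope UE d (fun i hi => (hUEpos i hi).ne')
  have hQF0 : QF 0 = 1 := by
    show (∑ y ∈ Fevent V 0, QS S y) = 1
    have hF0 : Fevent V 0 = (Finset.univ : Finset (Fin d → 𝒱)) :=
      Finset.filter_true_of_mem (fun y _ => fun t ht => absurd ht (Nat.not_lt_zero _))
    rw [hF0]
    exact hsum1
  have hQFeq : ∀ k : ℕ, (∑ y ∈ Fevent V k, QS S y) = QF k := fun _ => rfl
  have hUEeq : ∀ k : ℕ, UV V (Eevent S k) = UE k := fun _ => rfl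
  simp only [hQFeq, hUEeq] at hhard ⊢
  set A : Finset (Fin d) := Hard.filter (fun t => Real.exp (-η) ≤ QF (t.val+1) / QF t.val) with hA
  set B : Finset (Fin d) := Hard.filter (fun t => ¬ (Real.exp (-η) ≤ QF (t.val+1) / QF t.val)) with hB
  have hα0 : ∀ t : Fin d, 0 ≤ QF (t.val+1) / QF t.val :=
    fun t => div_nonneg (hQFpos _).le (hQFpos _).le
  have hα1 : ∀ t : Fin d, QF (t.val+1) / QF t.val ≤ 1 :=
    fun t => (div_le_one (hQFpos _)).mpr (hQFanti _)
  have hβ0 : ∀ t : Fin d, 0 ≤ UE (t.val+1) / UE t.val :=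
    fun t => div_nonneg (hUEnonneg _) (hUEnonneg _)
  have hβ1 : ∀ t : Fin d, UE (t.val+1) / UE t.val ≤ 1 :=
    fun t => (div_le_one (hUEpos t.val t.isLt)).mpr (hUEanti _)
  have hprodQ : ∏ t : Fin d, QF (t.val+1) / QF t.val = QF d := by
    rw [Fin.prod_univ_eq_prod_range (fun k => QF (k+1) / QF k) d, ← htelQ, hQF0, one_mul]
  have hprodU : ∏ t : Fin d, UE (t.val+1) / UE t.val = UE d := by
    rw [Fin.prod_univ_eq_prod_range (fun k => UE (k+1) / UE k) d, ← htelU, hUE0, one_mul]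
  have hsubsetprod : ∀ (f : Fin d → ℝ) (C : Finset (Fin d)), (∀ t, 0 ≤ f t) → (∀ t, f t ≤ 1) →
      ∏ t, f t ≤ ∏ t ∈ C, f t := by
    intro f C h0 h1
    rw [← Finset.prod_sdiff (Finset.subset_univ C)]
    exact mul_le_of_le_one_left (Finset.prod_nonneg fun t _ => h0 t)
      (Finset.prod_le_one (fun t _ => h0 t) (fun t _ => h1 t))
  have hBbound : 1 - δ ≤ Real.exp ((B.card : ℝ) * -η) := by
    have h1 : 1 - δ ≤ ∏ t ∈ B, QF (t.val+1) / QF t.val := by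
      calc 1 - δ ≤ QF d := hQFge d
      _ = ∏ t : Fin d, QF (t.val+1) / QF t.val := hprodQ.symm
      _ ≤ ∏ t ∈ B, QF (t.val+1) / QF t.val := hsubsetprod _ B hα0 hα1
    have h2 : ∏ t ∈ B, QF (t.val+1) / QF t.val ≤ ∏ t ∈ B, Real.exp (-η) := by
      apply Finset.prod_le_prod (fun t _ => hα0 t)
      intro t ht
      exact (not_le.mp (Finset.mem_filter.mp ht).2).le
    rw [Finset.prod_const] at h2
    calc 1 - δ ≤ _ := h1
    _ ≤ _ := h2
    _ = Real.exp ((B.card : ℝ) * -η) := (Real.exp_nat_mul _ _).symm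
  have hBcard : (B.card : ℝ) ≤ Real.log (1 / (1 - δ)) / η := by
    have hlog := (Real.log_le_iff_le_exp h1δ).mpr hBbound
    rw [one_div, Real.log_inv, le_div_iff₀ hη]
    nlinarith [hlog]
  have hABcard : A.card + B.card = Hard.card :=
    Finset.card_filter_add_card_filter_not _
  have hmax : max 0 ((m:ℝ) - Real.log (1/(1-δ))/η) ≤ (A.card : ℝ) := by
    apply max_le (Nat.cast_nonneg _)
    have hmr : (m : ℝ) ≤ Hard.card := by exact_mod_cast hm
    have h2 : (A.card : ℝ) + B.card = Hard.card := by exact_mod_cast hABcard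
    linarith
  have hfinal1 : UE d ≤ ∏ t ∈ A, UE (t.val+1) / UE t.val := by
    rw [← hprodU]
    exact hsubsetprod _ A hβ0 hβ1
  have hfinal2 : ∏ t ∈ A, UE (t.val+1) / UE t.val ≤ Real.exp ((A.card : ℝ) * -ρ) := by
    have h3 : ∏ t ∈ A, UE (t.val+1) / UE t.val ≤ ∏ t ∈ A, Real.exp (-ρ) := by
      apply Finset.prod_le_prod (fun t _ => hβ0 t)
      intro t ht
      obtain ⟨htH, hta⟩ := Finset.mem_filter.mp ht
      exact hhard t htH hta
    rw [Finset.prod_const] at h3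
    calc _ ≤ _ := h3
    _ = Real.exp ((A.card : ℝ) * -ρ) := (Real.exp_nat_mul _ _).symm
  calc UE d ≤ Real.exp ((A.card : ℝ) * -ρ) := hfinal1.trans hfinal2
  _ ≤ Real.exp (-ρ * max 0 ((m:ℝ) - Real.log (1/(1-δ))/η)) := by
    rw [Real.exp_le_exp]
    nlinarith [hmax, hρ.le]
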